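/- Two k-colorings f and g of a graph G are Kempe equivalent if and only if x_f − x_g belongs to the ideal ⟨[I_G]₂⟩ generated by all quadratic binomials of the toric ideal I_G. -/

import Mathlib

open MvPolynomial

section KempePrelim

variable {V : Type} 

/-- A proper `k`-coloring. -/
def IsColoring (G : SimpleGraph V) (k : ℕ) (f : V → Fin k) : Prop :=
  ∀ ⦃u v : V⦄, G.Adj u v → f u ≠ f v

/-- `g` is obtained from `f` by a Kempe switching: swap colors `i` and `j` on
one connected component of the subgraph induced on `f⁻¹(i) ∪ f⁻¹(j)`. -/
def KempeSwitch (G : SimpleGraph V) {k : ℕ} (f g : V → Fin k) : Prop :=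
  ∃ i j : Fin k, ∃ C : Set V,
    (∃ comp : (G.induce {v | f v = i ∨ f v = j}).ConnectedComponent,
      C = Subtype.val '' comp.supp) ∧
    (∀ v ∈ C, (f v = i → g v = j) ∧ (f v = j → g v = i)) ∧
    (∀ v ∉ C, g v = f v)

/-- A single step of Kempe equivalence between proper `k`-colorings. -/
def KempeStep (G : SimpleGraph V) {k : ℕ} (f g : V → Fin k) : Prop :=
  IsColoring G k f ∧ IsColoring G k g ∧ KempeSwitch G f g

/-- Kempe equivalence of `k`-colorings. -/
def KempeEquiv (G : SimpleGraph V) {k : ℕ} (f g : V → Fin k) : Prop :=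
  Relation.ReflTransGen (KempeStep G) f g

/-- The type of proper `k`-colorings of `G`. -/
def ProperColoring (G : SimpleGraph V) (k : ℕ) : Type _ :=
  {f : V → Fin k // IsColoring G k f}

/-- The number of Kempe classes of `k`-colorings of `G`. -/
noncomputable def Kc (G : SimpleGraph V) (k : ℕ) : ℕ :=
  Nat.card (Quot (fun f g : ProperColoring G k => KempeEquiv G f.1 g.1))

/-- The stable (independent) sets of `G`, as a type indexing variables. -/
def StableSet (G : SimpleGraph V) : Type _ :=
  {s : Finset V // ∀ ⦃i⦄, i ∈ s → ∀ ⦃j⦄, j ∈ s → ¬ G.Adj i j}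

def emptyStable (G : SimpleGraph V) : StableSet G :=
  ⟨∅, by intro i hi; simp at hi⟩

def singleStable (G : SimpleGraph V) (i : V) : StableSet G :=
  ⟨{i}, by
    intro a ha b hb
    simp only [Finset.mem_singleton] at ha hb
    rw [ha, hb]
    exact fun h => G.ne_of_adj h rfl⟩

def eraseStable (G : SimpleGraph V) [DecidableEq V] (S : StableSet G) (i : V) : StableSet G :=
  ⟨S.1.erase i, fun _ ha _ hb => S.2 (Finset.mem_of_mem_erase ha) (Finset.mem_of_mem_erase hb)⟩

variable (K : Type) [Field K]

/-- The monoid algebra map `x_S ↦ t^{ρ(S)} s`, into `K[t₁,…,t_d,s]`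
(realized as `MvPolynomial (Option V) K`, with `none` playing the role of `s`). -/
noncomputable def piMap (G : SimpleGraph V) :
    MvPolynomial (StableSet G) K →ₐ[K] MvPolynomial (Option V) K :=
  aeval fun S : StableSet G => (∏ i ∈ S.1, X (some i)) * X (none : Option V)

/-- The toric ideal `I_G` of the stable set ring. -/
noncomputable def toricIdeal (G : SimpleGraph V) : Ideal (MvPolynomial (StableSet G) K) :=
  RingHom.ker (piMap K G).toRingHom

/-- The ideal `L_G`. -/
noncomputable def idealL (G : SimpleGraph V) [DecidableEq V] :
    Ideal (MvPolynomial (StableSet G) K) :=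
  Ideal.span {p | ∃ (S : StableSet G) (i : V), i ∈ S.1 ∧ 2 ≤ S.1.card ∧
    p = X (eraseStable G S i) * X (singleStable G i) - X S * X (emptyStable G)}

/-- The 2-coloring ideal `J_G`. -/
noncomputable def idealJ (G : SimpleGraph V) [DecidableEq V] :
    Ideal (MvPolynomial (StableSet G) K) :=
  Ideal.span {p | ∃ S₁ S₂ S₃ S₄ : StableSet G,
    Disjoint S₁.1 S₂.1 ∧ Disjoint S₃.1 S₄.1 ∧ S₁.1 ∪ S₂.1 = S₃.1 ∪ S₄.1 ∧
    p = X S₁ * X S₂ - X S₃ * X S₄}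

/-- The ideal `⟨[I_G]₂⟩` generated by all quadratic binomials of `I_G`. -/
noncomputable def quadPart (G : SimpleGraph V) : Ideal (MvPolynomial (StableSet G) K) :=
  Ideal.span {p | (∃ S₁ S₂ S₃ S₄ : StableSet G, p = X S₁ * X S₂ - X S₃ * X S₄) ∧
    p ∈ toricIdeal K G}

/-- The monomial ideal `M_G`. -/
noncomputable def idealM (G : SimpleGraph V) [DecidableEq V] :
    Ideal (MvPolynomial (StableSet G) K) :=
  Ideal.span {p | ∃ S T : StableSet G, (S.1 ∩ T.1).Nonempty ∧ p = X S * X T}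

/-- The Kempe ideal `K_G = J_G + M_G`. -/
noncomputable def kempeIdeal (G : SimpleGraph V) [DecidableEq V] :
    Ideal (MvPolynomial (StableSet G) K) :=
  idealJ K G + idealM K G

/-- The color class of a proper coloring, as a stable set. -/
def colorClass (G : SimpleGraph V) [Fintype V] [DecidableEq V] {k : ℕ}
    (f : V → Fin k) (hf : IsColoring G k f) (c : Fin k) : StableSet G :=
  ⟨Finset.univ.filter (fun v => f v = c), by
    intro a ha b hb hadj
    simp only [Finset.mem_filter] at ha hb
    exact hf hadj (ha.2.trans hb.2.symm)⟩

/-- The monomial `x_f` associated with a proper `k`-coloring `f`. -/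
noncomputable def xMonomial (G : SimpleGraph V) [Fintype V] [DecidableEq V] {k : ℕ}
    (f : V → Fin k) (hf : IsColoring G k f) : MvPolynomial (StableSet G) K :=
  ∏ c : Fin k, X (colorClass G f hf c)

/-- The Hilbert function `k ↦ dim_K (R/I)_k` of a quotient of `R[G]`. -/
noncomputable def hilbertFn (G : SimpleGraph V)
    (I : Ideal (MvPolynomial (StableSet G) K)) (k : ℕ) : ℕ :=
  Module.finrank K (Submodule.map (Ideal.Quotient.mkₐ K I).toLinearMap
    (homogeneousSubmodule (StableSet G) K k))

end KempePrelim
section KempeProof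
open Finset

variable {d : ℕ}

/-- multiset-balance condition for a quadratic binomial to lie in the toric ideal -/
def QBal {G : SimpleGraph (Fin d)} (S₁ S₂ S₃ S₄ : StableSet G) : Prop :=
  ∀ v : Fin d, ((if v ∈ S₁.1 then 1 else 0) + (if v ∈ S₂.1 then 1 else 0) : ℕ)
    = (if v ∈ S₃.1 then 1 else 0) + (if v ∈ S₄.1 then 1 else 0)

lemma qbal_of_union {G : SimpleGraph (Fin d)} {S₁ S₂ S₃ S₄ : StableSet G}
    (h12 : Disjoint S₁.1 S₂.1) (h34 : Disjoint S₃.1 S₄.1)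
    (hu : S₁.1 ∪ S₂.1 = S₃.1 ∪ S₄.1) : QBal S₁ S₂ S₃ S₄ := by
  intro v
  have h1 : ¬(v ∈ S₁.1 ∧ v ∈ S₂.1) := fun h' => Finset.disjoint_left.mp h12 h'.1 h'.2
  have h2 : ¬(v ∈ S₃.1 ∧ v ∈ S₄.1) := fun h' => Finset.disjoint_left.mp h34 h'.1 h'.2
  have h3 : (v ∈ S₁.1 ∨ v ∈ S₂.1) ↔ (v ∈ S₃.1 ∨ v ∈ S₄.1) := by
    constructor <;> intro h
    · exact Finset.mem_union.mp (hu ▸ (Finset.mem_union.mpr h))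
    · exact Finset.mem_union.mp (hu ▸ (Finset.mem_union.mpr h))
  by_cases a1 : v ∈ S₁.1 <;> by_cases a2 : v ∈ S₂.1 <;>
    by_cases a3 : v ∈ S₃.1 <;> by_cases a4 : v ∈ S₄.1 <;> simp_all

lemma disjoint_union_of_qbal {G : SimpleGraph (Fin d)} {S₁ S₂ S₃ S₄ : StableSet G}
    (hb : QBal S₁ S₂ S₃ S₄) (h12 : Disjoint S₁.1 S₂.1) :
    Disjoint S₃.1 S₄.1 ∧ S₁.1 ∪ S₂.1 = S₃.1 ∪ S₄.1 := by
  constructor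
  · rw [Finset.disjoint_left]
    intro v h3 h4
    have := hb v
    have h1 : ¬(v ∈ S₁.1 ∧ v ∈ S₂.1) := fun h' => Finset.disjoint_left.mp h12 h'.1 h'.2
    by_cases a1 : v ∈ S₁.1 <;> by_cases a2 : v ∈ S₂.1 <;> simp_all
  · ext v
    have := hb v
    simp only [Finset.mem_union]
    by_cases a1 : v ∈ S₁.1 <;> by_cases a2 : v ∈ S₂.1 <;>
      by_cases a3 : v ∈ S₃.1 <;> by_cases a4 : v ∈ S₄.1 <;> simp_all

/-- the product of the variables of a stable set, as a product over all vertices -/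
lemma prod_over_univ {G : SimpleGraph (Fin d)} (S : StableSet G) {M : Type*} [CommMonoid M]
    (h : Fin d → M) : (∏ i ∈ S.1, h i) = ∏ v : Fin d, h v ^ (if v ∈ S.1 then 1 else 0) := by
  calc (∏ i ∈ S.1, h i) = ∏ v ∈ Finset.univ ∩ S.1, h v := by rw [Finset.univ_inter]
    _ = ∏ v : Fin d, (if v ∈ S.1 then h v else 1) := (Finset.prod_ite_mem _ _ _).symm
    _ = ∏ v : Fin d, h v ^ (if v ∈ S.1 then 1 else 0) :=
        Finset.prod_congr rfl (fun v _ => by split <;> simp)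

lemma piMap_XX (K : Type) [Field K] {G : SimpleGraph (Fin d)} (S T : StableSet G) :
    (piMap K G) (X S * X T)
      = (∏ v : Fin d, (X (some v) : MvPolynomial (Option (Fin d)) K)
          ^ ((if v ∈ S.1 then 1 else 0) + (if v ∈ T.1 then 1 else 0)))
        * (X none * X none) := by
  simp only [map_mul, piMap, aeval_X]
  rw [prod_over_univ S (fun v => (X (some v) : MvPolynomial (Option (Fin d)) K)),
    prod_over_univ T (fun v => (X (some v) : MvPolynomial (Option (Fin d)) K))]
  rw [show ∀ a b c e : MvPolynomial (Option (Fin d)) K, a * c * (b * e) = (a * b) * (c * e) from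
    fun a b c e => by ring, ← Finset.prod_mul_distrib]
  simp only [← pow_add]

lemma toric_of_qbal (K : Type) [Field K] {G : SimpleGraph (Fin d)}
    {S₁ S₂ S₃ S₄ : StableSet G} (hb : QBal S₁ S₂ S₃ S₄) :
    X S₁ * X S₂ - X S₃ * X S₄ ∈ toricIdeal K G := by
  rw [toricIdeal, RingHom.mem_ker]
  have : ((piMap K G).toRingHom) (X S₁ * X S₂ - X S₃ * X S₄)
      = (piMap K G) (X S₁ * X S₂) - (piMap K G) (X S₃ * X S₄) := by
    simp [map_sub]
  rw [this, piMap_XX, piMap_XX, sub_eq_zero]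
  congr 1
  exact Finset.prod_congr rfl (fun v _ => by rw [hb v])

lemma qbal_of_toric (K : Type) [Field K] {G : SimpleGraph (Fin d)}
    {S₁ S₂ S₃ S₄ : StableSet G}
    (ht : X S₁ * X S₂ - X S₃ * X S₄ ∈ toricIdeal K G) : QBal S₁ S₂ S₃ S₄ := by
  rw [toricIdeal, RingHom.mem_ker] at ht
  have heq : (piMap K G) (X S₁ * X S₂) = (piMap K G) (X S₃ * X S₄) := by
    have : (piMap K G) (X S₁ * X S₂) - (piMap K G) (X S₃ * X S₄) = 0 := by
      rw [← map_sub]; exact ht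
    exact sub_eq_zero.mp this
  intro v
  have key : ∀ S T : StableSet G,
      aeval (R := K) (fun o : Option (Fin d) => if o = some v then (Polynomial.X : Polynomial K) else 1)
        ((piMap K G) (X S * X T))
      = Polynomial.X ^ ((if v ∈ S.1 then 1 else 0) + (if v ∈ T.1 then 1 else 0)) := by
    intro S T
    rw [piMap_XX]
    simp only [map_mul, map_prod, map_pow, aeval_X]
    rw [show (if (none : Option (Fin d)) = some v then (Polynomial.X : Polynomial K) else 1) = 1
      from by simp]
    rw [mul_one, mul_one]
    rw [Finset.prod_congr rfl (fun w _ => show _ = if w = v then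
        (Polynomial.X : Polynomial K) ^ ((if w ∈ S.1 then 1 else 0) + (if w ∈ T.1 then 1 else 0))
        else 1 from by by_cases h : w = v <;> simp [h])]
    rw [Finset.prod_ite_eq' Finset.univ v, if_pos (Finset.mem_univ v)]
  have h2 := congrArg (aeval (R := K)
    (fun o : Option (Fin d) => if o = some v then (Polynomial.X : Polynomial K) else 1)) heq
  rw [key, key] at h2
  have h3 := congrArg Polynomial.natDegree h2
  rwa [Polynomial.natDegree_X_pow, Polynomial.natDegree_X_pow] at h3

end KempeProof
section KempeForward
open Finset

variable {d k : ℕ}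

lemma mem_colorClass_iff {G : SimpleGraph (Fin d)} {f : Fin d → Fin k} {hf : IsColoring G k f}
    {c : Fin k} {v : Fin d} : v ∈ (colorClass G f hf c).1 ↔ f v = c := by
  simp [colorClass]

lemma colorClass_disjoint {G : SimpleGraph (Fin d)} {f : Fin d → Fin k} (hf : IsColoring G k f)
    {a b : Fin k} (hab : a ≠ b) :
    Disjoint (colorClass G f hf a).1 (colorClass G f hf b).1 := by
  rw [Finset.disjoint_left]
  intro v hva hvb
  rw [mem_colorClass_iff] at hva hvb
  exact hab (hva ▸ hvb ▸ rfl)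

lemma kempeStep_sub_mem (K : Type) [Field K] {G : SimpleGraph (Fin d)} {f g : Fin d → Fin k}
    (hf : IsColoring G k f) (hg : IsColoring G k g) (hstep : KempeStep G f g) :
    xMonomial K G f hf - xMonomial K G g hg ∈ quadPart K G := by
  obtain ⟨-, -, i, j, C, ⟨comp, hC⟩, hsw, hout⟩ := hstep
  have hCD : ∀ v ∈ C, f v = i ∨ f v = j := by
    intro v hv
    rw [hC] at hv
    obtain ⟨u, -, rfl⟩ := hv
    exact u.2
  by_cases hij : i = j
  · have hgf : g = f := by
      funext v
      by_cases hvC : v ∈ C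
      · rcases hCD v hvC with h | h
        · rw [(hsw v hvC).1 h, ← hij, h]
        · rw [(hsw v hvC).2 h, hij, h]
      · exact hout v hvC
    subst hgf
    rw [sub_self]
    exact Ideal.zero_mem _
  · have hgC : ∀ v ∈ C, g v = i ∨ g v = j := by
      intro v hv
      rcases hCD v hv with h | h
      · exact Or.inr ((hsw v hv).1 h)
      · exact Or.inl ((hsw v hv).2 h)
    have hu : (colorClass G f hf i).1 ∪ (colorClass G f hf j).1 = (colorClass G g hg i).1 ∪ (colorClass G g hg j).1 := by
      ext v
      simp only [Finset.mem_union, mem_colorClass_iff]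
      by_cases hvC : v ∈ C
      · exact ⟨fun _ => hgC v hvC, fun _ => hCD v hvC⟩
      · rw [hout v hvC]
    have htoric : X (colorClass G f hf i) * X (colorClass G f hf j) - X (colorClass G g hg i) * X (colorClass G g hg j) ∈ toricIdeal K G :=
      toric_of_qbal K (qbal_of_union (colorClass_disjoint hf hij)
        (colorClass_disjoint hg hij) hu)
    have hclasses : ∀ c : Fin k, c ≠ i → c ≠ j →
        colorClass G g hg c = colorClass G f hf c := by
      intro c hci hcj
      apply Subtype.ext
      ext v
      simp only [mem_colorClass_iff]
      by_cases hvC : v ∈ C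
      · constructor
        · intro h; rcases hgC v hvC with h' | h' <;> exact absurd (h ▸ h') (by simp [hci, hcj])
        · intro h; rcases hCD v hvC with h' | h' <;> exact absurd (h ▸ h') (by simp [hci, hcj])
      · rw [hout v hvC]
    have hjmem : j ∈ Finset.univ.erase i := Finset.mem_erase.mpr ⟨Ne.symm hij, Finset.mem_univ j⟩
    have expand : ∀ (h : Fin d → Fin k) (hh : IsColoring G k h), xMonomial K G h hh
        = X (colorClass G h hh i) * (X (colorClass G h hh j)
          * ∏ c ∈ (Finset.univ.erase i).erase j, X (colorClass G h hh c)) := by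
      intro h hh
      rw [xMonomial, ← Finset.mul_prod_erase Finset.univ _ (Finset.mem_univ i),
        ← Finset.mul_prod_erase _ _ hjmem]
    have hrest : (∏ c ∈ (Finset.univ.erase i).erase j, X (colorClass G g hg c))
        = ∏ c ∈ (Finset.univ.erase i).erase j,
            (X (colorClass G f hf c) : MvPolynomial (StableSet G) K) := by
      refine Finset.prod_congr rfl (fun c hc => ?_)
      rw [Finset.mem_erase, Finset.mem_erase] at hc
      rw [hclasses c hc.2.1 hc.1]
    rw [expand f hf, expand g hg, hrest]
    have : X (colorClass G f hf i) * (X (colorClass G f hf j) * ∏ c ∈ (Finset.univ.erase i).erase j, X (colorClass G f hf c))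
        - X (colorClass G g hg i) * (X (colorClass G g hg j) * ∏ c ∈ (Finset.univ.erase i).erase j, X (colorClass G f hf c))
        = (X (colorClass G f hf i) * X (colorClass G f hf j) - X (colorClass G g hg i) * X (colorClass G g hg j))
          * ∏ c ∈ (Finset.univ.erase i).erase j,
              (X (colorClass G f hf c) : MvPolynomial (StableSet G) K) := by ring
    rw [this]
    exact Ideal.mul_mem_right _ _ (Ideal.subset_span ⟨⟨_, _, _, _, rfl⟩, htoric⟩)

lemma kempeEquiv_sub_mem (K : Type) [Field K] {G : SimpleGraph (Fin d)} {f : Fin d → Fin k}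
    (hf : IsColoring G k f) {g : Fin d → Fin k} (h : KempeEquiv G f g) :
    ∀ hg : IsColoring G k g, xMonomial K G f hf - xMonomial K G g hg ∈ quadPart K G := by
  induction h with
  | refl => intro hg; rw [sub_self]; exact Ideal.zero_mem _
  | tail hab hbc ih =>
      intro hg
      have hb := hbc.1
      have h1 := ih hb
      have h2 := kempeStep_sub_mem K hb hg hbc
      have h3 := Ideal.add_mem _ h1 h2
      rwa [sub_add_sub_cancel] at h3

end KempeForward
section KempeBackA
open Finset

variable {d k : ℕ}

/-- the exponent of a quadratic monomial -/
noncomputable def e2 {G : SimpleGraph (Fin d)} (S T : StableSet G) : (StableSet G →₀ ℕ) :=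
  Finsupp.single S 1 + Finsupp.single T 1

/-- one binomial move on exponent vectors -/
def MStep (G : SimpleGraph (Fin d)) : (StableSet G →₀ ℕ) → (StableSet G →₀ ℕ) → Prop :=
  fun m m' => ∃ S₁ S₂ S₃ S₄ : StableSet G, ∃ w : StableSet G →₀ ℕ,
    QBal S₁ S₂ S₃ S₄ ∧ m = w + e2 S₁ S₂ ∧ m' = w + e2 S₃ S₄

lemma mstep_symm {G : SimpleGraph (Fin d)} : Symmetric (MStep G) := by
  rintro m m' ⟨S₁, S₂, S₃, S₄, w, hb, h1, h2⟩
  exact ⟨S₃, S₄, S₁, S₂, w, fun v => (hb v).symm, h2, h1⟩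

lemma mstep_add {G : SimpleGraph (Fin d)} (u : StableSet G →₀ ℕ) {m m' : StableSet G →₀ ℕ}
    (h : MStep G m m') : MStep G (u + m) (u + m') := by
  obtain ⟨S₁, S₂, S₃, S₄, w, hb, h1, h2⟩ := h
  exact ⟨S₁, S₂, S₃, S₄, u + w, hb, by rw [h1, add_assoc], by rw [h2, add_assoc]⟩

/-- the additive congruence generated by binomial moves -/
noncomputable def mcon (G : SimpleGraph (Fin d)) : AddCon (StableSet G →₀ ℕ) := addConGen (MStep G)

/-- the partial character / quotient algebra map -/
noncomputable def psiMap (K : Type) [Field K] (G : SimpleGraph (Fin d)) :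
    MvPolynomial (StableSet G) K →ₐ[K] AddMonoidAlgebra K (mcon G).Quotient :=
  aeval fun S => AddMonoidAlgebra.single ((mcon G).mk' (Finsupp.single S 1)) 1

lemma psiMap_XX (K : Type) [Field K] {G : SimpleGraph (Fin d)} (S T : StableSet G) :
    psiMap K G (X S * X T) = AddMonoidAlgebra.single ((mcon G).mk' (e2 S T)) 1 := by
  rw [map_mul, psiMap, aeval_X, aeval_X, AddMonoidAlgebra.single_mul_single, one_mul, e2,
    map_add]

lemma psiMap_quadPart (K : Type) [Field K] {G : SimpleGraph (Fin d)}
    {p : MvPolynomial (StableSet G) K} (hp : p ∈ quadPart K G) : psiMap K G p = 0 := by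
  have hle : quadPart K G ≤ RingHom.ker (psiMap K G).toRingHom := by
    rw [quadPart, Ideal.span_le]
    rintro q ⟨⟨S₁, S₂, S₃, S₄, rfl⟩, ht⟩
    rw [SetLike.mem_coe, RingHom.mem_ker]
    have h1 : (psiMap K G).toRingHom (X S₁ * X S₂ - X S₃ * X S₄)
        = psiMap K G (X S₁ * X S₂) - psiMap K G (X S₃ * X S₄) := by simp [map_sub]
    rw [h1, psiMap_XX, psiMap_XX, sub_eq_zero]
    congr 1
    have hb := qbal_of_toric K ht
    have hstep : MStep G (e2 S₁ S₂) (e2 S₃ S₄) :=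
      ⟨S₁, S₂, S₃, S₄, 0, hb, (zero_add _).symm, (zero_add _).symm⟩
    exact (AddCon.eq _).mpr (AddConGen.Rel.of _ _ hstep)
  have h2 := hle hp
  rw [RingHom.mem_ker] at h2
  simpa using h2

/-- count the colors in each class -/
noncomputable def expo {G : SimpleGraph (Fin d)} (f : Fin d → Fin k) (hf : IsColoring G k f) :
    StableSet G →₀ ℕ :=
  ∑ c : Fin k, Finsupp.single (colorClass G f hf c) 1

lemma prod_single_mk (K : Type) [Field K] {G : SimpleGraph (Fin d)} {ι : Type} [DecidableEq ι]
    (s : Finset ι) (h : ι → (StableSet G →₀ ℕ)) :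
    (∏ i ∈ s, AddMonoidAlgebra.single ((mcon G).mk' (h i)) (1 : K))
      = AddMonoidAlgebra.single ((mcon G).mk' (∑ i ∈ s, h i)) 1 := by
  induction s using Finset.induction with
  | empty => simp [AddMonoidAlgebra.one_def]
  | insert _ _ hnotmem ih =>
      rw [Finset.prod_insert hnotmem, ih, AddMonoidAlgebra.single_mul_single, one_mul,
        Finset.sum_insert hnotmem, map_add]

lemma psiMap_xMonomial (K : Type) [Field K] {G : SimpleGraph (Fin d)} {f : Fin d → Fin k}
    (hf : IsColoring G k f) :
    psiMap K G (xMonomial K G f hf)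
      = AddMonoidAlgebra.single ((mcon G).mk' (expo f hf)) 1 := by
  rw [xMonomial, map_prod]
  simp only [psiMap, aeval_X]
  rw [prod_single_mk, expo]

lemma eqvgen_of_mcon {G : SimpleGraph (Fin d)} {m m' : StableSet G →₀ ℕ}
    (h : mcon G m m') : Relation.EqvGen (MStep G) m m' := by
  have hadd : ∀ (u : StableSet G →₀ ℕ) {x y : StableSet G →₀ ℕ},
      Relation.EqvGen (MStep G) x y → Relation.EqvGen (MStep G) (u + x) (u + y) := by
    intro u x y h
    induction h with
    | rel _ _ hr => exact Relation.EqvGen.rel _ _ (mstep_add u hr)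
    | refl _ => exact Relation.EqvGen.refl _
    | symm _ _ _ ih => exact Relation.EqvGen.symm _ _ ih
    | trans _ _ _ _ _ ih1 ih2 => exact Relation.EqvGen.trans _ _ _ ih1 ih2
  induction h with
  | of x y hxy => exact Relation.EqvGen.rel _ _ hxy
  | refl x => exact Relation.EqvGen.refl _
  | symm _ ih => exact Relation.EqvGen.symm _ _ ih
  | trans _ _ ih1 ih2 => exact Relation.EqvGen.trans _ _ _ ih1 ih2
  | add _ _ ih1 ih2 =>
      rename_i w x y z _ _
      refine Relation.EqvGen.trans _ (w + z) _ ?_ ?_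
      · exact hadd w ih2
      · rw [add_comm w z, add_comm x z]
        exact hadd z ih1

lemma rtg_of_eqvgen {α : Type*} {r : α → α → Prop} (hsymm : Symmetric r) {x y : α}
    (h : Relation.EqvGen r x y) : Relation.ReflTransGen r x y := by
  induction h with
  | rel _ _ hr => exact Relation.ReflTransGen.single hr
  | refl _ => exact Relation.ReflTransGen.refl
  | symm _ _ _ ih => haveI : Std.Symm r := ⟨fun a b h => hsymm h⟩; exact Std.Symm.symm _ _ ih
  | trans _ _ _ _ _ ih1 ih2 => exact Relation.ReflTransGen.trans ih1 ih2

end KempeBackA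
section KempeBackB
open Finset

variable {d k : ℕ}

/-- two proper colorings that differ only inside the union of the `a`- and `b`-classes
are Kempe equivalent -/
lemma two_color_prop {k : ℕ} {a b x y u v : Fin k} (hab : a ≠ b)
    (hx : x = a ∨ x = b) (hy : y = a ∨ y = b) (hu : u = a ∨ u = b) (hv : v = a ∨ v = b)
    (hxy : x ≠ y) (hxu : x ≠ u) (hyv : y ≠ v) : u ≠ v := by
  rcases hx with h | h <;> rcases hy with h' | h' <;> rcases hu with h'' | h'' <;>
    rcases hv with h''' | h''' <;> simp_all

/-- two proper colorings that differ only inside the union of the `a`- and `b`-classes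
are Kempe equivalent -/
lemma kempe_two_color {G : SimpleGraph (Fin d)} {a b : Fin k} (hab : a ≠ b) :
    ∀ n : ℕ, ∀ f g : Fin d → Fin k, IsColoring G k f → IsColoring G k g →
      (∀ v, f v = g v ∨ ((f v = a ∨ f v = b) ∧ (g v = a ∨ g v = b))) →
      (Finset.univ.filter (fun v => f v ≠ g v)).card ≤ n → KempeEquiv G f g := by
  intro n
  induction n with
  | zero =>
      intro f g hf hg H hcard
      have hempty := Finset.card_eq_zero.mp (Nat.le_zero.mp hcard)
      have : f = g := by
        funext v
        by_contra hne
        have : v ∈ Finset.univ.filter (fun v => f v ≠ g v) := by simp [hne]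
        rw [hempty] at this
        exact absurd this (Finset.notMem_empty v)
      rw [this]
      exact Relation.ReflTransGen.refl
  | succ n ih =>
      intro f g hf hg H hcard
      by_cases hfg : f = g
      · rw [hfg]
        exact Relation.ReflTransGen.refl
      · obtain ⟨v₀, hne⟩ := Function.ne_iff.mp hfg
        have hv₀D : f v₀ = a ∨ f v₀ = b := ((H v₀).resolve_left hne).1
        classical
        set comp := (G.induce {v | f v = a ∨ f v = b}).connectedComponentMk ⟨v₀, hv₀D⟩
          with hcomp
        set C : Set (Fin d) := Subtype.val '' comp.supp with hCdef
        have hCD : ∀ v ∈ C, f v = a ∨ f v = b := by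
          intro v hv
          obtain ⟨u, -, rfl⟩ := hv
          exact u.2
        have hv₀C : v₀ ∈ C :=
          ⟨⟨v₀, hv₀D⟩, (SimpleGraph.ConnectedComponent.mem_supp_iff _ _).mpr hcomp.symm, rfl⟩
        have hadjC : ∀ u ∈ C, ∀ (w : Fin d) (hwD : f w = a ∨ f w = b), G.Adj u w → w ∈ C := by
          intro u hu w hwD hadj
          obtain ⟨u', hu', rfl⟩ := hu
          refine ⟨⟨w, hwD⟩, ?_, rfl⟩
          rw [SimpleGraph.ConnectedComponent.mem_supp_iff] at hu' ⊢
          rw [← hu']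
          refine SimpleGraph.ConnectedComponent.sound ?_
          refine SimpleGraph.Adj.reachable ?_
          show (G.comap _).Adj _ _
          rw [SimpleGraph.comap_adj]
          exact hadj.symm
        have hCne : ∀ v ∈ C, f v ≠ g v := by
          intro v hv
          obtain ⟨u, hu, rfl⟩ := hv
          rw [SimpleGraph.ConnectedComponent.mem_supp_iff, hcomp] at hu
          have hreach := (SimpleGraph.ConnectedComponent.eq.mp hu).symm
          rw [SimpleGraph.reachable_iff_reflTransGen] at hreach
          clear hu
          induction hreach with
          | refl => exact hne
          | tail hr hadj ih2 =>
              rename_i b' c'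
              have hGadj : G.Adj b'.1 c'.1 := by
                have : (G.comap _).Adj b' c' := hadj
                rw [SimpleGraph.comap_adj] at this
                exact this
              have hfb : f b'.1 = a ∨ f b'.1 = b := b'.2
              have hfc : f c'.1 = a ∨ f c'.1 = b := c'.2
              have hgb : g b'.1 = a ∨ g b'.1 = b := ((H b'.1).resolve_left ih2).2
              have hgc : g c'.1 = a ∨ g c'.1 = b := by
                rcases H c'.1 with h | h
                · rw [← h]; exact hfc
                · exact h.2
              have h1 := hf hGadj
              have h2 := hg hGadj
              exact two_color_prop hab hfb hgb hfc hgc ih2 h1 h2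
        set f' : Fin d → Fin k := fun v => if v ∈ C then (if f v = a then b else a) else f v
          with hf'def
        have hf'out : ∀ v ∉ C, f' v = f v := by
          intro v hv
          simp only [hf'def, if_neg hv]
        have hswapC : ∀ v ∈ C, f' v = g v := by
          intro v hv
          have hne' := hCne v hv
          have hgD := ((H v).resolve_left hne').2
          simp only [hf'def, if_pos hv]
          rcases hCD v hv with h | h
          · rw [if_pos h]
            rcases hgD with h' | h'
            · exact absurd (h.trans h'.symm) hne'
            · exact h'.symm
          · rw [if_neg (by rw [h]; exact fun hh => hab hh.symm)]
            rcases hgD with h' | h'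
            · exact h'.symm
            · exact absurd (h.trans h'.symm) hne'
        have hf'col : IsColoring G k f' := by
          intro u w hadj heq
          by_cases hu : u ∈ C <;> by_cases hw : w ∈ C
          · have h1 := hCD u hu
            have h2 := hCD w hw
            have h3 := hf hadj
            simp only [hf'def, if_pos hu, if_pos hw] at heq
            rcases h1 with h1 | h1 <;> rcases h2 with h2 | h2
            · exact h3 (h1.trans h2.symm)
            · rw [if_pos h1, if_neg (by rw [h2]; exact fun hh => hab hh.symm)] at heq
              exact hab heq.symm
            · rw [if_neg (by rw [h1]; exact fun hh => hab hh.symm), if_pos h2] at heq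
              exact hab heq
            · exact h3 (h1.trans h2.symm)
          · simp only [hf'def, if_pos hu, if_neg hw] at heq
            have hwD : f w = a ∨ f w = b := by
              by_cases hfu : f u = a
              · rw [if_pos hfu] at heq; exact Or.inr heq.symm
              · rw [if_neg hfu] at heq; exact Or.inl heq.symm
            exact hw (hadjC u hu w hwD hadj)
          · simp only [hf'def, if_neg hu, if_pos hw] at heq
            have huD : f u = a ∨ f u = b := by
              by_cases hfw : f w = a
              · rw [if_pos hfw] at heq; exact Or.inr heq
              · rw [if_neg hfw] at heq; exact Or.inl heq
            exact hu (hadjC w hw u huD hadj.symm)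
          · simp only [hf'def, if_neg hu, if_neg hw] at heq
            exact hf hadj heq
        have hstep : KempeStep G f f' := by
          refine ⟨hf, hf'col, a, b, C, ⟨comp, hCdef⟩, ?_, hf'out⟩
          intro v hv
          constructor
          · intro h
            simp only [hf'def, if_pos hv, if_pos h]
          · intro h
            simp only [hf'def, if_pos hv]
            rw [if_neg (by rw [h]; exact fun hh => hab hh.symm)]
        have hH' : ∀ v, f' v = g v ∨ ((f' v = a ∨ f' v = b) ∧ (g v = a ∨ g v = b)) := by
          intro v
          by_cases hv : v ∈ C
          · exact Or.inl (hswapC v hv)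
          · rw [hf'out v hv]; exact H v
        have hsub : Finset.univ.filter (fun v => f' v ≠ g v)
            ⊆ (Finset.univ.filter (fun v => f v ≠ g v)).erase v₀ := by
          intro v hvmem
          simp only [Finset.mem_filter, Finset.mem_univ, true_and] at hvmem
          have hvC : v ∉ C := fun h => hvmem (hswapC v h)
          rw [Finset.mem_erase]
          refine ⟨fun h => hvC (h ▸ hv₀C), ?_⟩
          simp only [Finset.mem_filter, Finset.mem_univ, true_and]
          rw [← hf'out v hvC]
          exact hvmem
        have hcard' : (Finset.univ.filter (fun v => f' v ≠ g v)).card ≤ n := by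
          have h1 := Finset.card_le_card hsub
          have h2 : v₀ ∈ Finset.univ.filter (fun v => f v ≠ g v) := by simp [hne]
          rw [Finset.card_erase_of_mem h2] at h1
          have h3 := Finset.card_pos.mpr ⟨v₀, h2⟩
          omega
        exact Relation.ReflTransGen.head hstep (ih f' g hf'col hg hH' hcard')

/-- globally swapping two colors is a Kempe equivalence -/
lemma swap_colors_equiv {G : SimpleGraph (Fin d)} {f : Fin d → Fin k}
    (hf : IsColoring G k f) {a b : Fin k} (hab : a ≠ b) :
    KempeEquiv G f ((Equiv.swap a b) ∘ f) := by
  have hg : IsColoring G k ((Equiv.swap a b) ∘ f) := by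
    intro u v h he
    exact hf h ((Equiv.swap a b).injective he)
  refine kempe_two_color hab (Finset.univ.filter
    (fun v => f v ≠ (Equiv.swap a b) (f v))).card f _ hf hg ?_ le_rfl
  intro v
  by_cases ha : f v = a
  · refine Or.inr ⟨Or.inl ha, Or.inr ?_⟩
    simp [Function.comp, ha, Equiv.swap_apply_left]
  · by_cases hb : f v = b
    · refine Or.inr ⟨Or.inr hb, Or.inl ?_⟩
      simp [Function.comp, hb, Equiv.swap_apply_right]
    · refine Or.inl ?_
      simp [Function.comp, Equiv.swap_apply_of_ne_of_ne ha hb]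
open scoped Classical

lemma classcount_swap {G : SimpleGraph (Fin d)} {f : Fin d → Fin k} (hf : IsColoring G k f)
    (σ : Equiv.Perm (Fin k)) (hf' : IsColoring G k (⇑σ ∘ f)) (S : StableSet G) :
    (Finset.univ.filter (fun c => colorClass G (⇑σ ∘ f) hf' c = S)).card
      = (Finset.univ.filter (fun c => colorClass G f hf c = S)).card := by
  have hclass : ∀ c, colorClass G (⇑σ ∘ f) hf' c = colorClass G f hf (σ.symm c) := by
    intro c
    apply Subtype.ext
    ext v
    rw [mem_colorClass_iff, mem_colorClass_iff]
    constructor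
    · intro h
      have := congrArg σ.symm h
      simpa using this
    · intro h
      have := congrArg σ h
      simp only [Equiv.apply_symm_apply] at this
      simpa [Function.comp] using this
  refine Finset.card_bij' (fun c _ => σ.symm c) (fun c _ => σ c) ?_ ?_ ?_ ?_
  · intro c hc
    simp only [Finset.mem_filter, Finset.mem_univ, true_and] at hc ⊢
    rw [← hclass]
    exact hc
  · intro c hc
    simp only [Finset.mem_filter, Finset.mem_univ, true_and] at hc ⊢
    rw [hclass, Equiv.symm_apply_apply]
    exact hc
  · intro c _; exact σ.apply_symm_apply c
  · intro c _; exact σ.symm_apply_apply c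

lemma classes_perm_equiv {G : SimpleGraph (Fin d)} :
    ∀ n : ℕ, ∀ f g : Fin d → Fin k, ∀ hf : IsColoring G k f, ∀ hg : IsColoring G k g,
      (∀ S : StableSet G,
        (Finset.univ.filter (fun c => colorClass G f hf c = S)).card
          = (Finset.univ.filter (fun c => colorClass G g hg c = S)).card) →
      (Finset.univ.filter
        (fun c : Fin k => colorClass G f hf c ≠ colorClass G g hg c)).card ≤ n →
      KempeEquiv G f g := by
  intro n
  induction n with
  | zero =>
      intro f g hf hg hcount hcard
      have hempty := Finset.card_eq_zero.mp (Nat.le_zero.mp hcard)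
      have hall : ∀ c, colorClass G f hf c = colorClass G g hg c := by
        intro c
        by_contra hne
        have : c ∈ Finset.univ.filter
            (fun c : Fin k => colorClass G f hf c ≠ colorClass G g hg c) := by simp [hne]
        rw [hempty] at this
        exact absurd this (Finset.notMem_empty c)
      have : f = g := by
        funext v
        have h1 : v ∈ (colorClass G f hf (f v)).1 := mem_colorClass_iff.mpr rfl
        rw [hall (f v)] at h1
        exact (mem_colorClass_iff.mp h1).symm
      rw [this]
      exact Relation.ReflTransGen.refl
  | succ n ih =>
      intro f g hf hg hcount hcard
      by_cases hall : ∀ c, colorClass G f hf c = colorClass G g hg c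
      · have : f = g := by
          funext v
          have h1 : v ∈ (colorClass G f hf (f v)).1 := mem_colorClass_iff.mpr rfl
          rw [hall (f v)] at h1
          exact (mem_colorClass_iff.mp h1).symm
        rw [this]
        exact Relation.ReflTransGen.refl
      · push_neg at hall
        obtain ⟨c₀, hc₀⟩ := hall
        have hc₀P : c₀ ∉ Finset.univ.filter
            (fun c => colorClass G f hf c = colorClass G g hg c₀) := by simp [hc₀]
        have hc₀Q : c₀ ∈ Finset.univ.filter
            (fun c => colorClass G g hg c = colorClass G g hg c₀) := by simp
        have hPQ := hcount (colorClass G g hg c₀)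
        have hex : ∃ c₁ ∈ Finset.univ.filter
            (fun c => colorClass G f hf c = colorClass G g hg c₀),
            c₁ ∉ Finset.univ.filter
              (fun c => colorClass G g hg c = colorClass G g hg c₀) := by
          by_contra hcon
          push_neg at hcon
          have hsub : Finset.univ.filter
              (fun c => colorClass G f hf c = colorClass G g hg c₀)
              ⊆ Finset.univ.filter
                (fun c => colorClass G g hg c = colorClass G g hg c₀) := hcon
          have := Finset.eq_of_subset_of_card_le hsub (le_of_eq hPQ.symm)
          rw [← this] at hc₀Q
          exact hc₀P hc₀Q
        obtain ⟨c₁, hc₁P, hc₁Q⟩ := hex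
        simp only [Finset.mem_filter, Finset.mem_univ, true_and] at hc₁P hc₁Q
        have hc₁c₀ : c₁ ≠ c₀ := fun h => hc₀ (h ▸ hc₁P)
        -- swap colors c₀ and c₁ in f
        set σ := Equiv.swap c₀ c₁ with hσ
        set f' := ⇑σ ∘ f with hf'def
        have hf' : IsColoring G k f' := by
          intro u v h he
          exact hf h (σ.injective he)
        have hkfe : KempeEquiv G f f' := swap_colors_equiv hf (Ne.symm hc₁c₀)
        have hclass : ∀ c, colorClass G f' hf' c = colorClass G f hf (σ c) := by
          intro c
          apply Subtype.ext
          ext v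
          rw [mem_colorClass_iff, mem_colorClass_iff]
          constructor
          · intro h
            have := congrArg σ h
            rw [hf'def] at this
            simpa [hσ, Equiv.swap_apply_self] using this
          · intro h
            simp [hf'def, Function.comp, h, hσ, Equiv.swap_apply_self]
        have hcount' : ∀ S : StableSet G,
            (Finset.univ.filter (fun c => colorClass G f' hf' c = S)).card
              = (Finset.univ.filter (fun c => colorClass G g hg c = S)).card := by
          intro S
          rw [← hcount S]
          exact classcount_swap hf σ hf' S
        have hdiff : Finset.univ.filter
              (fun c : Fin k => colorClass G f' hf' c ≠ colorClass G g hg c)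
            ⊆ (Finset.univ.filter
              (fun c : Fin k => colorClass G f hf c ≠ colorClass G g hg c)).erase c₀ := by
          intro c hc
          simp only [Finset.mem_filter, Finset.mem_univ, true_and] at hc
          rw [Finset.mem_erase]
          constructor
          · intro h
            subst h
            apply hc
            rw [hclass, hσ, Equiv.swap_apply_left, hc₁P]
          · simp only [Finset.mem_filter, Finset.mem_univ, true_and]
            by_cases h1 : c = c₁
            · subst h1
              intro hcon
              exact hc₁Q (hc₁P ▸ hcon ▸ rfl)
            · by_cases h0 : c = c₀
              · subst h0
                exact hc₀
              · rw [hclass, hσ, Equiv.swap_apply_of_ne_of_ne h0 h1] at hc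
                exact hc
        have hcard' : (Finset.univ.filter
            (fun c : Fin k => colorClass G f' hf' c ≠ colorClass G g hg c)).card ≤ n := by
          have h1 := Finset.card_le_card hdiff
          have h2 : c₀ ∈ Finset.univ.filter
              (fun c : Fin k => colorClass G f hf c ≠ colorClass G g hg c) := by simp [hc₀]
          rw [Finset.card_erase_of_mem h2] at h1
          have h3 := Finset.card_pos.mpr ⟨c₀, h2⟩
          omega
        exact Relation.ReflTransGen.trans hkfe (ih f' g hf' hg hcount' hcard')
lemma expo_apply {G : SimpleGraph (Fin d)} {f : Fin d → Fin k} (hf : IsColoring G k f)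
    (S : StableSet G) :
    expo f hf S = (Finset.univ.filter (fun c : Fin k => colorClass G f hf c = S)).card := by
  rw [expo, Finsupp.finset_sum_apply,
    Finset.sum_congr rfl (fun c _ => Finsupp.single_apply (a := colorClass G f hf c))]
  simp [Finset.sum_boole (fun c : Fin k => colorClass G f hf c = S) Finset.univ]

lemma mstep_step {G : SimpleGraph (Fin d)} {m m' : StableSet G →₀ ℕ}
    (h : MStep G m m') {f : Fin d → Fin k} (hf : IsColoring G k f) (hm : m = expo f hf) :
    ∃ (g : Fin d → Fin k) (hg : IsColoring G k g), m' = expo g hg ∧ KempeEquiv G f g := by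
  classical
  obtain ⟨S₁, S₂, S₃, S₄, w, hb, h1, h2⟩ := h
  rw [hm] at h1
  clear hm
  have happ : ∀ S : StableSet G, expo f hf S
      = w S + ((Finsupp.single S₁ 1 : StableSet G →₀ ℕ) S + (Finsupp.single S₂ 1) S) := by
    intro S
    rw [h1]
    simp [e2, Finsupp.add_apply]
  -- find two distinct colors a, b whose classes are S₁, S₂
  obtain ⟨a, b, hab, hca, hcb⟩ : ∃ a b : Fin k, a ≠ b ∧
      colorClass G f hf a = S₁ ∧ colorClass G f hf b = S₂ := by
    by_cases h12 : S₁ = S₂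
    · have hval := happ S₁
      rw [expo_apply hf, Finsupp.single_eq_same, ← h12, Finsupp.single_eq_same] at hval
      have hlt : 1 < (Finset.univ.filter (fun c : Fin k => colorClass G f hf c = S₁)).card := by
        omega
      obtain ⟨a, haa, b, hbb, hab⟩ := Finset.one_lt_card.mp hlt
      simp only [Finset.mem_filter, Finset.mem_univ, true_and] at haa hbb
      exact ⟨a, b, hab, haa, h12 ▸ hbb⟩
    · have hval1 := happ S₁
      rw [expo_apply hf, Finsupp.single_eq_same] at hval1
      have hpos1 : 0 < (Finset.univ.filter (fun c : Fin k => colorClass G f hf c = S₁)).card := by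
        omega
      obtain ⟨a, haa⟩ := Finset.card_pos.mp hpos1
      have hval2 := happ S₂
      rw [expo_apply hf, Finsupp.single_eq_same] at hval2
      have hpos2 : 0 < (Finset.univ.filter (fun c : Fin k => colorClass G f hf c = S₂)).card := by
        omega
      obtain ⟨b, hbb⟩ := Finset.card_pos.mp hpos2
      simp only [Finset.mem_filter, Finset.mem_univ, true_and] at haa hbb
      refine ⟨a, b, ?_, haa, hbb⟩
      intro hcon
      exact h12 (by rw [← haa, hcon, hbb])
  have hd12 : Disjoint S₁.1 S₂.1 := hca ▸ hcb ▸ colorClass_disjoint hf hab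
  obtain ⟨hd34, hu⟩ := disjoint_union_of_qbal hb hd12
  have hmemu : ∀ v, (v ∈ S₁.1 ∨ v ∈ S₂.1) ↔ (v ∈ S₃.1 ∨ v ∈ S₄.1) := by
    intro v
    rw [← Finset.mem_union, ← Finset.mem_union, hu]
  have hf1 : ∀ v, f v = a ↔ v ∈ S₁.1 := fun v => by rw [← hca, mem_colorClass_iff]
  have hf2 : ∀ v, f v = b ↔ v ∈ S₂.1 := fun v => by rw [← hcb, mem_colorClass_iff]
  set g : Fin d → Fin k := fun v => if v ∈ S₃.1 then a else if v ∈ S₄.1 then b else f v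
    with hgdef
  have hga : ∀ v, g v = a ↔ v ∈ S₃.1 := by
    intro v
    constructor
    · intro h
      by_contra h3
      by_cases h4 : v ∈ S₄.1
      · rw [hgdef] at h
        simp only [if_neg h3, if_pos h4] at h
        exact hab h.symm
      · rw [hgdef] at h
        simp only [if_neg h3, if_neg h4] at h
        have : v ∈ S₁.1 := (hf1 v).mp h
        rcases (hmemu v).mp (Or.inl this) with h' | h'
        · exact h3 h'
        · exact h4 h'
    · intro h
      rw [hgdef]
      simp only [if_pos h]
  have hgb : ∀ v, g v = b ↔ v ∈ S₄.1 := by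
    intro v
    constructor
    · intro h
      by_cases h3 : v ∈ S₃.1
      · rw [hgdef] at h
        simp only [if_pos h3] at h
        exact absurd h hab
      · by_cases h4 : v ∈ S₄.1
        · exact h4
        · rw [hgdef] at h
          simp only [if_neg h3, if_neg h4] at h
          have : v ∈ S₂.1 := (hf2 v).mp h
          rcases (hmemu v).mp (Or.inr this) with h' | h'
          · exact absurd h' h3
          · exact absurd h' h4
    · intro h
      have h3 : v ∉ S₃.1 := Finset.disjoint_right.mp hd34 h
      rw [hgdef]
      simp only [if_neg h3, if_pos h]
  have hgc : ∀ (v : Fin d) (c : Fin k), c ≠ a → c ≠ b → (g v = c ↔ f v = c) := by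
    intro v c hc1 hc2
    constructor
    · intro h
      by_cases h3 : v ∈ S₃.1
      · exact absurd (((hga v).mpr h3).symm.trans h) (Ne.symm hc1)
      · by_cases h4 : v ∈ S₄.1
        · exact absurd (((hgb v).mpr h4).symm.trans h) (Ne.symm hc2)
        · rw [hgdef] at h
          simpa only [if_neg h3, if_neg h4] using h
    · intro h
      have h1' : v ∉ S₁.1 := fun hmem => hc1 (by rw [← h, (hf1 v).mpr hmem])
      have h2' : v ∉ S₂.1 := fun hmem => hc2 (by rw [← h, (hf2 v).mpr hmem])
      have h34 : v ∉ S₃.1 ∧ v ∉ S₄.1 := by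
        constructor <;> intro hmem
        · rcases (hmemu v).mpr (Or.inl hmem) with h' | h'
          · exact h1' h'
          · exact h2' h'
        · rcases (hmemu v).mpr (Or.inr hmem) with h' | h'
          · exact h1' h'
          · exact h2' h'
      rw [hgdef]
      simp only [if_neg h34.1, if_neg h34.2]
      exact h
  have hg : IsColoring G k g := by
    intro u v hadj he
    by_cases hua : g u = a
    · exact S₃.2 ((hga u).mp hua) ((hga v).mp (he ▸ hua)) hadj
    · by_cases hub : g u = b
      · exact S₄.2 ((hgb u).mp hub) ((hgb v).mp (he ▸ hub)) hadj
      · have hfu : f u = g u := ((hgc u (g u) hua hub).mp rfl).symm.symm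
        have hfv : f v = g u := (hgc v (g u) hua hub).mp he.symm
        exact hf hadj (((hgc u (g u) hua hub).mp rfl).symm ▸ hfv ▸ rfl)
  have hclass3 : colorClass G g hg a = S₃ :=
    Subtype.ext (Finset.ext fun v => by rw [mem_colorClass_iff]; exact hga v)
  have hclass4 : colorClass G g hg b = S₄ :=
    Subtype.ext (Finset.ext fun v => by rw [mem_colorClass_iff]; exact hgb v)
  have hclassc : ∀ c : Fin k, c ≠ a → c ≠ b →
      colorClass G g hg c = colorClass G f hf c :=
    fun c hc1 hc2 => Subtype.ext (Finset.ext fun v => by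
      rw [mem_colorClass_iff, mem_colorClass_iff]; exact hgc v c hc1 hc2)
  have hbmem : b ∈ Finset.univ.erase a :=
    Finset.mem_erase.mpr ⟨Ne.symm hab, Finset.mem_univ b⟩
  have hsplit : ∀ F : Fin k → (StableSet G →₀ ℕ),
      (∑ c, F c) = F a + F b + ∑ c ∈ (Finset.univ.erase a).erase b, F c := by
    intro F
    rw [← Finset.add_sum_erase _ F (Finset.mem_univ a), ← Finset.add_sum_erase _ F hbmem]
    abel
  have hrest : (∑ c ∈ (Finset.univ.erase a).erase b,
        Finsupp.single (colorClass G g hg c) (1 : ℕ))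
      = ∑ c ∈ (Finset.univ.erase a).erase b, Finsupp.single (colorClass G f hf c) 1 := by
    refine Finset.sum_congr rfl (fun c hc => ?_)
    rw [Finset.mem_erase, Finset.mem_erase] at hc
    rw [hclassc c hc.2.1 hc.1]
  have hsum : expo g hg + e2 S₁ S₂ = expo f hf + e2 S₃ S₄ := by
    rw [expo, expo, hsplit (fun c => Finsupp.single (colorClass G g hg c) 1),
      hsplit (fun c => Finsupp.single (colorClass G f hf c) 1), hrest,
      hclass3, hclass4, hca, hcb, e2, e2]
    abel
  have hm' : m' = expo g hg := by
    have hc1 : expo g hg + e2 S₁ S₂ = (w + e2 S₃ S₄) + e2 S₁ S₂ := by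
      rw [hsum, h1]
      abel
    have := add_right_cancel hc1
    rw [h2, ← this]
  refine ⟨g, hg, hm', ?_⟩
  refine kempe_two_color hab _ f g hf hg ?_ le_rfl
  intro v
  by_cases h3 : v ∈ S₃.1
  · refine Or.inr ⟨?_, Or.inl ((hga v).mpr h3)⟩
    rcases (hmemu v).mpr (Or.inl h3) with h' | h'
    · exact Or.inl ((hf1 v).mpr h')
    · exact Or.inr ((hf2 v).mpr h')
  · by_cases h4 : v ∈ S₄.1
    · refine Or.inr ⟨?_, Or.inr ((hgb v).mpr h4)⟩
      rcases (hmemu v).mpr (Or.inr h4) with h' | h'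
      · exact Or.inl ((hf1 v).mpr h')
      · exact Or.inr ((hf2 v).mpr h')
    · refine Or.inl ?_
      rw [hgdef]
      simp only [if_neg h3, if_neg h4]

lemma rtg_chain {G : SimpleGraph (Fin d)} {m m' : StableSet G →₀ ℕ}
    (h : Relation.ReflTransGen (MStep G) m m') :
    ∀ (f : Fin d → Fin k) (hf : IsColoring G k f), m = expo f hf →
      ∃ (g : Fin d → Fin k) (hg : IsColoring G k g), m' = expo g hg ∧ KempeEquiv G f g := by
  induction h with
  | refl => exact fun f hf hm => ⟨f, hf, hm, Relation.ReflTransGen.refl⟩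
  | tail hr hstep ih =>
      intro f hf hm
      obtain ⟨g1, hg1, hm1, hk1⟩ := ih f hf hm
      obtain ⟨g2, hg2, hm2, hk2⟩ := mstep_step hstep hg1 hm1
      exact ⟨g2, hg2, hm2, Relation.ReflTransGen.trans hk1 hk2⟩

lemma kempe_of_mem_quadPart (K : Type) [Field K] {G : SimpleGraph (Fin d)}
    {f g : Fin d → Fin k} (hf : IsColoring G k f) (hg : IsColoring G k g)
    (hmem : xMonomial K G f hf - xMonomial K G g hg ∈ quadPart K G) : KempeEquiv G f g := by
  have h0 := psiMap_quadPart K hmem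
  rw [map_sub, sub_eq_zero, psiMap_xMonomial K hf, psiMap_xMonomial K hg] at h0
  have h2 : (mcon G).mk' (expo f hf) = (mcon G).mk' (expo g hg) :=
    AddMonoidAlgebra.single_left_injective one_ne_zero h0
  have h3 : (mcon G) (expo f hf) (expo g hg) := (AddCon.eq _).mp h2
  have h4 := rtg_of_eqvgen mstep_symm (eqvgen_of_mcon h3)
  obtain ⟨g', hg', hexpo, hk⟩ := rtg_chain h4 f hf rfl
  have hcount : ∀ S : StableSet G,
      (Finset.univ.filter (fun c : Fin k => colorClass G g' hg' c = S)).card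
        = (Finset.univ.filter (fun c : Fin k => colorClass G g hg c = S)).card := by
    intro S
    rw [← expo_apply, ← expo_apply, ← hexpo]
  have hperm := classes_perm_equiv (Finset.univ.filter
    (fun c : Fin k => colorClass G g' hg' c ≠ colorClass G g hg c)).card g' g hg' hg
    hcount le_rfl
  exact Relation.ReflTransGen.trans hk hperm

end KempeBackB

theorem kempe_equiv_iff_mem_quadPart {d k : ℕ} (G : SimpleGraph (Fin d))
    (K : Type) [Field K] (f g : Fin d → Fin k)
    (hf : IsColoring G k f) (hg : IsColoring G k g) :
    KempeEquiv G f g ↔ xMonomial K G f hf - xMonomial K G g hg ∈ quadPart K G := by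
  constructor
  · intro h
    exact kempeEquiv_sub_mem K hf h hg
  · intro h
    exact kempe_of_mem_quadPart K hf hg h
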